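/- For every integer m ≥ 1, the formal power series identity (-x)^{m-1}/(1+x)^m · x^m/(1-x)^{m+1} = (-1)^{m-1} · ∑_{r=0}^∞ C(⌊(r+1)/2⌋, m) x^r holds, i.e., the coefficient of x^r in (-x)^{m-1} x^m / ((1+x)^m (1-x)^{m+1}) equals (-1)^{m-1} C(⌊(r+1)/2⌋, m). -/

import Mathlib

open PowerSeries

private noncomputable def fser (m : ℕ) : PowerSeries ℚ :=
  PowerSeries.mk (fun r => (Nat.choose ((r + 1) / 2) m : ℚ))

private lemma fser_step (m : ℕ) (hm : 2 ≤ m) :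
    fser m * (1 - X ^ 2) = fser (m - 1) * X ^ 2 := by
  ext r
  simp only [mul_sub, mul_one, map_sub, coeff_mul_X_pow', fser, coeff_mk]
  rcases Nat.even_or_odd r with ⟨k, hk⟩ | ⟨k, hk⟩ <;> subst hk
  · rcases Nat.eq_zero_or_pos k with rfl | hk1
    · norm_num [Nat.choose_eq_zero_of_lt (show 0 < m by omega)]
    · have h2 : 2 ≤ k + k := by omega
      rw [if_pos h2, if_pos h2]
      have e1 : (k + k + 1) / 2 = k := by omega
      have e2 : (k + k - 2 + 1) / 2 = k - 1 := by omega
      rw [e1, e2]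
      obtain ⟨k', rfl⟩ : ∃ k', k = k' + 1 := ⟨k - 1, by omega⟩
      obtain ⟨m', rfl⟩ : ∃ m', m = m' + 1 := ⟨m - 1, by omega⟩
      have h := Nat.choose_succ_succ k' m'
      simp only [Nat.add_sub_cancel]
      push_cast [h]
      ring
  · rcases Nat.eq_zero_or_pos k with rfl | hk1
    · norm_num [Nat.choose_eq_zero_of_lt (show 1 < m by omega)]
    · have h2 : 2 ≤ 2 * k + 1 := by omega
      rw [if_pos h2, if_pos h2]
      have e1 : (2 * k + 1 + 1) / 2 = k + 1 := by omega
      have e2 : (2 * k + 1 - 2 + 1) / 2 = k := by omega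
      rw [e1, e2]
      obtain ⟨m', rfl⟩ : ∃ m', m = m' + 1 := ⟨m - 1, by omega⟩
      have h := Nat.choose_succ_succ k m'
      simp only [Nat.add_sub_cancel]
      push_cast [h]
      ring

private lemma fser_zero : fser 0 * (1 - X) = 1 := by
  have h : fser 0 * (1 - X) = fser 0 - fser 0 * X ^ 1 := by ring
  rw [h]
  ext r
  simp only [map_sub, coeff_mul_X_pow', fser, coeff_mk, Nat.choose_zero_right, coeff_one]
  rcases Nat.eq_zero_or_pos r with rfl | hr
  · norm_num
  · rw [if_pos (by omega : 1 ≤ r), if_neg (by omega : ¬ r = 0)]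
    norm_num

private lemma fser_one_step : fser 1 * (1 - X ^ 2) = fser 0 * X ^ 2 + X := by
  ext r
  simp only [mul_sub, mul_one, map_sub, map_add, coeff_mul_X_pow', fser, coeff_mk,
    Nat.choose_one_right, Nat.choose_zero_right, coeff_X]
  rcases Nat.lt_or_ge r 2 with hr | hr
  · interval_cases r <;> norm_num
  · rw [if_pos hr, if_pos hr, if_neg (by omega)]
    have e : (r - 2 + 1) / 2 + 1 = (r + 1) / 2 := by omega
    rw [← e]
    push_cast
    ring

private lemma fser_base : fser 1 * ((1 - X ^ 2) ^ 1 * (1 - X)) = X := by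
  rw [pow_one, ← mul_assoc, fser_one_step, add_mul]
  have h : fser 0 * X ^ 2 * (1 - X) = X ^ 2 * (fser 0 * (1 - X)) := by ring
  rw [h, fser_zero]
  ring

private lemma fser_key (m : ℕ) (hm : 1 ≤ m) :
    fser m * ((1 - X ^ 2) ^ m * (1 - X)) = X ^ (2 * m - 1) := by
  induction m, hm using Nat.le_induction with
  | base => simpa using fser_base
  | succ n hn ih =>
      have step := fser_step (n + 1) (by omega)
      have h1 : fser (n + 1) * ((1 - X ^ 2) ^ (n + 1) * (1 - X))
          = (fser (n + 1) * (1 - X ^ 2)) * ((1 - X ^ 2) ^ n * (1 - X)) := by ring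
      rw [h1, step]
      simp only [Nat.add_sub_cancel]
      have h2 : fser n * X ^ 2 * ((1 - X ^ 2) ^ n * (1 - X))
          = X ^ 2 * (fser n * ((1 - X ^ 2) ^ n * (1 - X))) := by ring
      rw [h2, ih, ← pow_add]
      congr 1
      omega

theorem powerSeries_identity (m : ℕ) (hm : 1 ≤ m) :
    ((-(PowerSeries.X : PowerSeries ℚ)) ^ (m - 1) * (PowerSeries.X : PowerSeries ℚ) ^ m)
        * ((1 + (PowerSeries.X : PowerSeries ℚ)) ^ m
            * (1 - (PowerSeries.X : PowerSeries ℚ)) ^ (m + 1))⁻¹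
      = PowerSeries.mk (fun r => (-1 : ℚ) ^ (m - 1) * (Nat.choose ((r + 1) / 2) m : ℚ)) := by
  set D : PowerSeries ℚ := (1 + X) ^ m * (1 - X) ^ (m + 1) with hDdef
  have hsq : ((1 : ℚ⟦X⟧) - X ^ 2) = (1 + X) * (1 - X) := by ring
  have hDfac : D = (1 - X ^ 2) ^ m * (1 - X) := by
    rw [hsq, mul_pow, hDdef, pow_succ]
    ring
  have hDc : constantCoeff D ≠ 0 := by
    simp [hDdef]
  have hkey : fser m * D = X ^ (2 * m - 1) := by
    rw [hDfac]; exact fser_key m hm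
  have hXD : (X : ℚ⟦X⟧) ^ (2 * m - 1) * D⁻¹ = fser m := by
    rw [← hkey, mul_assoc, PowerSeries.mul_inv_cancel D hDc, mul_one]
  have hXX : (X : ℚ⟦X⟧) ^ (m - 1) * X ^ m = X ^ (2 * m - 1) := by
    rw [← pow_add]
    congr 1
    omega
  have hRHS : PowerSeries.mk (fun r => (-1 : ℚ) ^ (m - 1) * (Nat.choose ((r + 1) / 2) m : ℚ))
      = (-1 : ℚ⟦X⟧) ^ (m - 1) * fser m := by
    have hC : ((-1 : ℚ⟦X⟧)) ^ (m - 1) = C ((-1 : ℚ) ^ (m - 1)) := by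
      rw [map_pow, map_neg, map_one]
    ext r
    rw [hC, coeff_C_mul]
    simp only [fser, coeff_mk]
  rw [hRHS, neg_pow, mul_assoc, mul_assoc, ← mul_assoc (X ^ (m - 1) : ℚ⟦X⟧), hXX, hXD]
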